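/- Fix x = q₂ ∈ ℝ. If the sequence (u_n) satisfies the recurrence (n + 1/2)u_{n+1} = 2xn·u_n − (n − 1/2)u_{n−1} for all n ≥ 1, then the sequence û_n := (u_{n+1} − u_{n−1})/n (defined for n ≥ 1) satisfies (n + 3/2)û_{n+1} = 2xn·û_n − (n − 3/2)û_{n−1} for all n ≥ 2. -/

import Mathlib

/-- If `(u_n)` satisfies `(n+1/2)u_{n+1} = 2xn·u_n − (n−1/2)u_{n−1}` for `n ≥ 1`,
then `uhat_n = (u_{n+1} − u_{n−1})/n` satisfies
`(n+3/2)uhat_{n+1} = 2xn·uhat_n − (n−3/2)uhat_{n−1}` for `n ≥ 2`. -/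
theorem stmt10 (x : ℝ) (u : ℕ → ℝ)
    (hu : ∀ n : ℕ, 1 ≤ n →
      ((n:ℝ)+1/2)*u (n+1) = 2*x*(n:ℝ)*u n - ((n:ℝ)-1/2)*u (n-1))
    (uhat : ℕ → ℝ)
    (huhat : ∀ n : ℕ, 1 ≤ n → uhat n = (u (n+1) - u (n-1))/(n:ℝ)) :
    ∀ n : ℕ, 2 ≤ n →
      ((n:ℝ)+3/2)*uhat (n+1) = 2*x*(n:ℝ)*uhat n - ((n:ℝ)-3/2)*uhat (n-1) := by
  intro n hn
  obtain ⟨m, rfl⟩ : ∃ m, n = m + 2 := ⟨n - 2, by omega⟩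
  have h1 := hu (m+3) (by omega)
  have h3 := hu (m+1) (by omega)
  have e1 := huhat (m+3) (by omega)
  have e2 := huhat (m+2) (by omega)
  have e3 := huhat (m+1) (by omega)
  simp only [show m+3-1 = m+2 from rfl, show m+2-1 = m+1 from rfl,
    show m+1-1 = m from rfl] at *
  rw [show m+2+1 = m+3 from rfl, e1, e2, e3]
  push_cast at *
  have a1 : ((m:ℝ)+3) ≠ 0 := by positivity
  have a2 : ((m:ℝ)+2) ≠ 0 := by positivity
  have a3 : ((m:ℝ)+1) ≠ 0 := by positivity
  field_simp
  ring_nf at h1 h3 ⊢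
  linear_combination (2*((m:ℝ)+1))*h1 - (2*((m:ℝ)+3))*h3
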